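/- arXiv:1906.03912 — 2 statements merged into one kernel-verified Lean document; each statement's English description precedes it below -/
import Mathlib

section
/- Let f ≥ q ≥ 1 be integers. The subgroup of ℤ^f generated by the vectors αᵢ = eᵢ − e_{i+1} for 1 ≤ i ≤ f−1 together with α_f = e₁ + e₂ + ⋯ + e_q equals the lattice Λ = {x ∈ ℤ^f : q divides Σᵢ xᵢ}. -/
private def Lam (f q : ℕ) : AddSubgroup (Fin f → ℤ) where
  carrier := {x : Fin f → ℤ | (q : ℤ) ∣ ∑ i, x i}
  add_mem' := by
    rintro a b (ha : (q:ℤ) ∣ _) (hb : (q:ℤ) ∣ _)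
    show (q:ℤ) ∣ ∑ i, (a + b) i
    simpa [Finset.sum_add_distrib] using dvd_add ha hb
  zero_mem' := by
    show (q:ℤ) ∣ ∑ i : Fin f, (0 : Fin f → ℤ) i
    simp
  neg_mem' := by
    rintro a (ha : (q:ℤ) ∣ _)
    show (q:ℤ) ∣ ∑ i, (-a) i
    simpa using ha.neg_right

private lemma sumzero_mem (f : ℕ) (y : Fin f → ℤ) (hy : ∑ i, y i = 0) :
    y ∈ AddSubgroup.closure
      {v : Fin f → ℤ | ∃ i : Fin f, (i : ℕ) + 1 < f ∧
          v = fun j : Fin f => if (j : ℕ) = (i : ℕ) then 1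
                       else if (j : ℕ) = (i : ℕ) + 1 then -1 else 0} := by
  set d : ℕ → ℤ := fun n => ∑ j : Fin f, if (j : ℕ) < n then y j else 0 with hd
  have hd0 : d 0 = 0 := by simp [hd]
  have hdf : ∀ n, f ≤ n → d n = 0 := by
    intro n hn
    have : d n = ∑ j : Fin f, y j := by
      apply Finset.sum_congr rfl
      intro j _
      rw [if_pos (lt_of_lt_of_le j.isLt hn)]
    rw [this, hy]
  have hstep : ∀ n : ℕ, (hn : n < f) → d (n + 1) - d n = y ⟨n, hn⟩ := by
    intro n hn
    have : d (n+1) - d n = ∑ j : Fin f, ((if (j : ℕ) < n+1 then y j else 0)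
        - (if (j : ℕ) < n then y j else 0)) := by
      rw [Finset.sum_sub_distrib]
    rw [this]
    have : ∀ j : Fin f, ((if (j : ℕ) < n+1 then y j else 0)
        - (if (j : ℕ) < n then y j else 0)) = (if (j : ℕ) = n then y j else 0) := by
      intro j
      split_ifs with h1 h2 h3 <;> try ring
      all_goals omega
    rw [Finset.sum_congr rfl (fun j _ => this j)]
    have : (∑ j : Fin f, if (j : ℕ) = n then y j else 0)
        = ∑ j : Fin f, if j = (⟨n, hn⟩ : Fin f) then y j else 0 := by
      apply Finset.sum_congr rfl; intro j _
      simp [Fin.ext_iff]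
    rw [this, Finset.sum_ite_eq' Finset.univ (⟨n, hn⟩ : Fin f) y]
    simp
  -- the decomposition
  have hrep : y = ∑ i : Fin f, d ((i : ℕ) + 1) •
      (fun j : Fin f => (if (j : ℕ) = (i : ℕ) then (1:ℤ) else 0)
        - (if (j : ℕ) = (i : ℕ) + 1 then 1 else 0)) := by
    funext j
    rw [Finset.sum_apply]
    have hterm : ∀ i : Fin f, (d ((i : ℕ) + 1) •
        (fun j : Fin f => (if (j : ℕ) = (i : ℕ) then (1:ℤ) else 0)
          - (if (j : ℕ) = (i : ℕ) + 1 then 1 else 0))) j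
        = (if (j : ℕ) = (i : ℕ) then d ((i:ℕ)+1) else 0)
          - (if (j : ℕ) = (i : ℕ) + 1 then d (j:ℕ) else 0) := by
      intro i
      simp only [Pi.smul_apply, smul_eq_mul, mul_sub, mul_ite, mul_one, mul_zero]
      congr 1
      split_ifs with h
      · rw [h]
      · rfl
    rw [Finset.sum_congr rfl (fun i _ => hterm i), Finset.sum_sub_distrib]
    have h1 : ∑ i : Fin f, (if (j : ℕ) = (i : ℕ) then d ((i:ℕ)+1) else 0)
        = d ((j:ℕ)+1) := by
      have : ∀ i : Fin f, (if (j : ℕ) = (i : ℕ) then d ((i:ℕ)+1) else 0)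
          = (if i = j then d ((j:ℕ)+1) else 0) := by
        intro i
        split_ifs with h h' h'
        · rw [h]
        · exact absurd (Fin.ext h.symm) h'
        · exact absurd (congrArg Fin.val h'.symm) h
        · rfl
      rw [Finset.sum_congr rfl (fun i _ => this i), Finset.sum_ite_eq' Finset.univ j]
      simp
    have h2 : ∑ i : Fin f, (if (j : ℕ) = (i : ℕ) + 1 then d (j:ℕ) else 0)
        = d (j:ℕ) := by
      rcases Nat.eq_zero_or_pos (j : ℕ) with h0 | hpos
      · have : ∀ i : Fin f, (if (j : ℕ) = (i : ℕ) + 1 then d (j:ℕ) else 0) = 0 := by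
          intro i; rw [if_neg (by omega)]
        rw [Finset.sum_congr rfl (fun i _ => this i), Finset.sum_const, smul_zero, h0, hd0]
      · obtain ⟨m, hm⟩ := Nat.exists_eq_add_of_lt hpos
        have hmf : m < f := by omega
        have : ∀ i : Fin f, (if (j : ℕ) = (i : ℕ) + 1 then d (j:ℕ) else 0)
            = (if i = (⟨m, hmf⟩ : Fin f) then d (j:ℕ) else 0) := by
          intro i
          have : (j : ℕ) = (i : ℕ) + 1 ↔ i = (⟨m, hmf⟩ : Fin f) := by
            constructor
            · intro h; apply Fin.ext; simp; omega
            · intro h; subst h; simp; omega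
          simp only [this]
        rw [Finset.sum_congr rfl (fun i _ => this i),
          Finset.sum_ite_eq' Finset.univ (⟨m, hmf⟩ : Fin f)]
        simp
    rw [h1, h2]
    have := hstep (j:ℕ) j.isLt
    simp only [Fin.eta] at this
    linarith
  rw [hrep]
  apply AddSubgroup.sum_mem
  intro i _
  rcases Nat.lt_or_ge ((i:ℕ)+1) f with hif | hif
  · apply AddSubgroup.zsmul_mem
    apply AddSubgroup.subset_closure
    refine ⟨i, hif, ?_⟩
    funext j
    split_ifs with h1 h2 <;> simp <;> omega
  · have : (i:ℕ) + 1 = f := by omega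
    rw [this, hdf f le_rfl, zero_smul]
    exact zero_mem _

theorem stmt_3 (f q : ℕ) (hq : 1 ≤ q) (hfq : q ≤ f) :
    (AddSubgroup.closure
        ({v : Fin f → ℤ | ∃ i : Fin f, (i : ℕ) + 1 < f ∧
            v = fun j : Fin f => if (j : ℕ) = (i : ℕ) then 1
                         else if (j : ℕ) = (i : ℕ) + 1 then -1 else 0} ∪
         {fun j : Fin f => if (j : ℕ) < q then (1 : ℤ) else 0}) :
      Set (Fin f → ℤ)) = {x : Fin f → ℤ | (q : ℤ) ∣ ∑ i, x i} := by
  have hwsum : ∑ j : Fin f, (if (j : ℕ) < q then (1 : ℤ) else 0) = q := by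
    rw [Fin.sum_univ_eq_sum_range (fun n => if n < q then (1:ℤ) else 0) f,
      Finset.sum_ite, Finset.sum_const, Finset.sum_const]
    have : Finset.filter (fun x => x < q) (Finset.range f) = Finset.range q := by
      ext x; simp; omega
    simp [this]
  apply le_antisymm
  · have hle : AddSubgroup.closure
        (({v : Fin f → ℤ | ∃ i : Fin f, (i : ℕ) + 1 < f ∧
            v = fun j : Fin f => if (j : ℕ) = (i : ℕ) then 1
                         else if (j : ℕ) = (i : ℕ) + 1 then -1 else 0} ∪
         {fun j : Fin f => if (j : ℕ) < q then (1 : ℤ) else 0}) : Set (Fin f → ℤ))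
        ≤ Lam f q := by
      rw [AddSubgroup.closure_le]
      rintro v (⟨i, hi, rfl⟩ | hv)
      · show (q:ℤ) ∣ _
        have : ∑ j : Fin f, (if (j : ℕ) = (i : ℕ) then (1:ℤ)
            else if (j : ℕ) = (i : ℕ) + 1 then -1 else 0) = 0 := by
          have hterm : ∀ j : Fin f, (if (j : ℕ) = (i : ℕ) then (1:ℤ)
              else if (j : ℕ) = (i : ℕ) + 1 then -1 else 0)
              = (if j = i then (1:ℤ) else 0) - (if j = (⟨(i:ℕ)+1, hi⟩ : Fin f) then 1 else 0) := by
            intro j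
            rcases eq_or_ne ((j:ℕ)) ((i:ℕ)) with h | h
            · rw [if_pos h, if_pos (Fin.ext h), if_neg, sub_zero]
              intro hc; rw [hc] at h; simp at h
            · rw [if_neg h, if_neg (fun hc => h (congrArg Fin.val hc))]
              rcases eq_or_ne ((j:ℕ)) ((i:ℕ)+1) with h2 | h2
              · rw [if_pos h2, if_pos (Fin.ext h2)]; ring
              · rw [if_neg h2, if_neg (fun hc => h2 (congrArg Fin.val hc))]; ring
          rw [Finset.sum_congr rfl (fun j _ => hterm j), Finset.sum_sub_distrib,
            Finset.sum_ite_eq' Finset.univ i, Finset.sum_ite_eq' Finset.univ]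
          simp
        rw [this]; exact dvd_zero _
      · rw [Set.mem_singleton_iff] at hv
        subst hv
        show (q:ℤ) ∣ _
        rw [hwsum]
    exact fun x hx => hle hx
  · rintro x (hx : (q:ℤ) ∣ ∑ i, x i)
    obtain ⟨k, hk⟩ := hx
    set w : Fin f → ℤ := fun j => if (j : ℕ) < q then (1 : ℤ) else 0 with hw
    have hy : ∑ i, (x - k • w) i = 0 := by
      simp only [Pi.sub_apply, Pi.smul_apply, smul_eq_mul, Finset.sum_sub_distrib,
        ← Finset.mul_sum, hwsum, hk]
      ring
    have hmem := sumzero_mem f (x - k • w) hy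
    have hmem' : x - k • w ∈ AddSubgroup.closure
        (({v : Fin f → ℤ | ∃ i : Fin f, (i : ℕ) + 1 < f ∧
            v = fun j : Fin f => if (j : ℕ) = (i : ℕ) then 1
                         else if (j : ℕ) = (i : ℕ) + 1 then -1 else 0} ∪
         {fun j : Fin f => if (j : ℕ) < q then (1 : ℤ) else 0}) : Set (Fin f → ℤ)) :=
      AddSubgroup.closure_mono Set.subset_union_left hmem
    have hwmem : w ∈ AddSubgroup.closure
        (({v : Fin f → ℤ | ∃ i : Fin f, (i : ℕ) + 1 < f ∧
            v = fun j : Fin f => if (j : ℕ) = (i : ℕ) then 1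
                         else if (j : ℕ) = (i : ℕ) + 1 then -1 else 0} ∪
         {fun j : Fin f => if (j : ℕ) < q then (1 : ℤ) else 0}) : Set (Fin f → ℤ)) :=
      AddSubgroup.subset_closure (Set.mem_union_right _ rfl)
    have := add_mem hmem' (AddSubgroup.zsmul_mem _ hwmem k)
    simpa using this
end

section
/- The set of vectors x = (x₁,x₂,x₃) ∈ ℤ³ with 3 dividing 2x₁ + x₂ + x₃ and x₁² + x₂² + x₃² − (1/9)·(2x₁ + x₂ + x₃)² = 2 consists of exactly the four vectors ±(0,1,−1) and ±(2,1,1). -/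
theorem stmt_14 :
    {x : ℤ × ℤ × ℤ |
        (3 : ℤ) ∣ (2 * x.1 + x.2.1 + x.2.2) ∧
        ((x.1 : ℚ) ^ 2 + (x.2.1 : ℚ) ^ 2 + (x.2.2 : ℚ) ^ 2)
          - (1 / 9) * (2 * (x.1 : ℚ) + (x.2.1 : ℚ) + (x.2.2 : ℚ)) ^ 2 = 2} =
      {(0, 1, -1), (0, -1, 1), (2, 1, 1), (-2, -1, -1)} := by
  ext ⟨a, b, c⟩
  simp only [Set.mem_setOf_eq, Set.mem_insert_iff, Set.mem_singleton_iff,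
    Prod.mk.injEq]
  have key : (((a : ℚ)) ^ 2 + (b : ℚ) ^ 2 + (c : ℚ) ^ 2
      - (1 / 9) * (2 * (a : ℚ) + (b : ℚ) + (c : ℚ)) ^ 2 = 2)
      ↔ 9 * (a ^ 2 + b ^ 2 + c ^ 2) - (2 * a + b + c) ^ 2 = 18 := by
    rw [show (18 : ℤ) = (18 : ℤ) from rfl]
    constructor
    · intro h
      have h9 : (9 : ℚ) * ((a : ℚ) ^ 2 + (b : ℚ) ^ 2 + (c : ℚ) ^ 2)
          - (2 * (a : ℚ) + (b : ℚ) + (c : ℚ)) ^ 2 = 18 := by linarith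
      exact_mod_cast h9
    · intro h
      have h9 : ((9 * (a ^ 2 + b ^ 2 + c ^ 2) - (2 * a + b + c) ^ 2 : ℤ) : ℚ) = 18 := by
        exact_mod_cast h
      push_cast at h9
      linarith
  rw [key]
  constructor
  · rintro ⟨hd, h⟩
    have ha : a ^ 2 ≤ 6 := by nlinarith [sq_nonneg (a - 2*b), sq_nonneg (a - 2*c), sq_nonneg (b - c), sq_nonneg b, sq_nonneg c]
    have hb : b ^ 2 ≤ 6 := by nlinarith [sq_nonneg (a - 2*b), sq_nonneg (a - 2*c), sq_nonneg (b - c), sq_nonneg a, sq_nonneg c]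
    have hc : c ^ 2 ≤ 6 := by nlinarith [sq_nonneg (a - 2*b), sq_nonneg (a - 2*c), sq_nonneg (b - c), sq_nonneg a, sq_nonneg b]
    have ha' : -2 ≤ a ∧ a ≤ 2 := by constructor <;> nlinarith
    have hb' : -2 ≤ b ∧ b ≤ 2 := by constructor <;> nlinarith
    have hc' : -2 ≤ c ∧ c ≤ 2 := by constructor <;> nlinarith
    obtain ⟨ha1, ha2⟩ := ha'
    obtain ⟨hb1, hb2⟩ := hb'
    obtain ⟨hc1, hc2⟩ := hc'
    obtain ⟨k, hk⟩ := hd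
    interval_cases a <;> interval_cases b <;> interval_cases c <;> omega
  · rintro (⟨h1, h2, h3⟩ | ⟨h1, h2, h3⟩ | ⟨h1, h2, h3⟩ | ⟨h1, h2, h3⟩) <;>
      subst h1 <;> subst h2 <;> subst h3 <;> exact ⟨by decide, by decide⟩
end
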